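/- arXiv:1907.08369 — 5 statements merged into one kernel-verified Lean document; each statement's English description precedes it below -/
import Mathlib

section
/- For all real c, the second moment of the shifted asymmetric loss satisfies ∫_{-∞}^{∞} L(z + c)² · f(z) dz = (k₁² + k₂²)·c²/2 + Sgn(c)·((k₁² − k₂²)·c² / (2·Γ(a)))·γ(a, |c/b|^{1/a}) + ((k₁² − k₂²)·b·c / Γ(a))·Γ-upper(2a, |c/b|^{1/a}) + (k₁² + k₂²)·b²·Γ(3a) / (2·Γ(a)) + Sgn(c)·((k₁² − k₂²)·b² / (2·Γ(a)))·γ(3a, |c/b|^{1/a}). -/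
open Real MeasureTheory Filter

/-- The asymmetric loss function. -/
noncomputable def asymLoss (k₁ k₂ z : ℝ) : ℝ := if 0 ≤ z then k₁ * z else -k₂ * z

/-- The generalized Gaussian density with mean zero. -/
noncomputable def genGauss (a b z : ℝ) : ℝ :=
  (2 * a * b * Real.Gamma a)⁻¹ * Real.exp (-(|z / b| ^ (1 / a)))

/-- The lower incomplete gamma function. -/
noncomputable def lowerGamma (p x : ℝ) : ℝ := ∫ t in (0:ℝ)..x, t ^ (p - 1) * Real.exp (-t)

/-- The upper incomplete gamma function. -/
noncomputable def upperGamma (p x : ℝ) : ℝ := ∫ t in Set.Ioi x, t ^ (p - 1) * Real.exp (-t)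

/-- The sign function used in the paper: `1` for `c ≥ 0`, `-1` for `c < 0`. -/
noncomputable def Sgn (c : ℝ) : ℝ := if 0 ≤ c then 1 else -1

open Set

lemma gammaInt {p : ℝ} (hp : 0 < p) {X : ℝ} (hX : 0 ≤ X) :
    IntegrableOn (fun t : ℝ => t ^ (p - 1) * Real.exp (-t)) (Set.Ioi X) := by
  have h := Real.GammaIntegral_convergent hp
  exact (h.mono_set (Set.Ioi_subset_Ioi hX)).congr_fun
    (fun t _ => mul_comm _ _) measurableSet_Ioi

lemma upperGamma_zero {p : ℝ} (hp : 0 < p) : upperGamma p 0 = Real.Gamma p := by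
  rw [upperGamma, Real.Gamma_eq_integral hp]
  exact setIntegral_congr_fun measurableSet_Ioi fun t _ => mul_comm _ _

lemma lowerGamma_eq {p X : ℝ} (hp : 0 < p) (hX : 0 ≤ X) :
    lowerGamma p X = Real.Gamma p - upperGamma p X := by
  have hsplit : (∫ t in Ioc 0 X, t ^ (p - 1) * Real.exp (-t))
        + ∫ t in Ioi X, t ^ (p - 1) * Real.exp (-t)
      = ∫ t in Ioi (0:ℝ), t ^ (p - 1) * Real.exp (-t) := by
    rw [← setIntegral_union (Ioc_disjoint_Ioi le_rfl) measurableSet_Ioi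
      ((gammaInt hp le_rfl).mono_set Ioc_subset_Ioi_self) (gammaInt hp hX),
      Ioc_union_Ioi_eq_Ioi hX]
  have h0 : upperGamma p 0 = ∫ t in Ioi (0:ℝ), t ^ (p - 1) * Real.exp (-t) := rfl
  rw [lowerGamma, intervalIntegral.integral_of_le hX, upperGamma, ← upperGamma_zero hp, h0]
  linarith [hsplit]

lemma cov {a b : ℝ} (ha : 0 < a) (hb : 0 < b) (n : ℕ) {X : ℝ} (hX : 0 ≤ X) :
    IntegrableOn (fun z : ℝ => z ^ n * Real.exp (-(z / b) ^ (1 / a))) (Set.Ioi (b * X ^ a)) ∧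
    ∫ z in Set.Ioi (b * X ^ a), z ^ n * Real.exp (-(z / b) ^ (1 / a)) =
      a * b ^ (n + 1) * upperGamma ((n + 1 : ℝ) * a) X := by
  set g : ℝ → ℝ := fun z => z ^ n * Real.exp (-(z / b) ^ (1 / a)) with hg
  set f : ℝ → ℝ := fun t => b * t ^ a with hf
  set f' : ℝ → ℝ := fun t => b * (a * t ^ (a - 1)) with hf'
  have hp : 0 < (n + 1 : ℝ) * a := by positivity
  have hderiv : ∀ t ∈ Ioi X, HasDerivWithinAt f (f' t) (Ioi X) t := by
    intro t ht
    have ht0 : t ≠ 0 := (lt_of_le_of_lt hX ht).ne'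
    exact ((Real.hasDerivAt_rpow_const (Or.inl ht0)).const_mul b).hasDerivWithinAt
  have hinj : InjOn f (Ioi X) := by
    intro s hs t ht hst
    have hs0 : (0:ℝ) ≤ s := le_trans hX (le_of_lt hs)
    have ht0 : (0:ℝ) ≤ t := le_trans hX (le_of_lt ht)
    have : s ^ a = t ^ a := mul_left_cancel₀ hb.ne' hst
    exact Real.rpow_left_injOn ha.ne' hs0 ht0 this
  have himg : f '' Ioi X = Ioi (b * X ^ a) := by
    ext y
    constructor
    · rintro ⟨t, ht, rfl⟩
      exact mul_lt_mul_of_pos_left (Real.rpow_lt_rpow hX ht ha) hb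
    · intro hy
      have hy' : b * X ^ a < y := hy
      have hXa : (0:ℝ) ≤ X ^ a := Real.rpow_nonneg hX a
      refine ⟨(y / b) ^ (1 / a), ?_, ?_⟩
      · have h1 : X ^ a < y / b := (lt_div_iff₀' hb).mpr hy'
        have := Real.rpow_lt_rpow hXa h1 (by positivity : (0:ℝ) < 1/a)
        rwa [← Real.rpow_mul hX, mul_one_div, div_self ha.ne', Real.rpow_one] at this
      · have hy0 : 0 < y := lt_of_le_of_lt (by positivity) hy'
        have hyb : (0:ℝ) ≤ y / b := by positivity
        show b * ((y / b) ^ (1 / a)) ^ a = y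
        rw [← Real.rpow_mul hyb, one_div, inv_mul_cancel₀ ha.ne', Real.rpow_one,
          mul_div_cancel₀ _ hb.ne']
  have hpt : ∀ t ∈ Ioi X, |f' t| • g (f t)
      = a * b ^ (n + 1) * (t ^ ((n + 1 : ℝ) * a - 1) * Real.exp (-t)) := by
    intro t ht
    have ht0 : 0 < t := lt_of_le_of_lt hX ht
    have h1 : (b * t ^ a) / b = t ^ a := by field_simp
    have h2 : (t ^ a) ^ (1/a) = t := by
      rw [← Real.rpow_mul ht0.le, mul_one_div, div_self ha.ne', Real.rpow_one]
    have h3 : |f' t| = b * (a * t ^ (a - 1)) := by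
      simp only [hf']
      rw [abs_of_nonneg]
      positivity
    have h4 : (b * t ^ a) ^ n = b ^ n * t ^ (a * (n:ℝ)) := by
      rw [mul_pow, ← Real.rpow_natCast (t ^ a) n, ← Real.rpow_mul ht0.le]
    have h5 : t ^ ((n + 1 : ℝ) * a - 1) = t ^ (a - 1) * t ^ (a * (n:ℝ)) := by
      rw [← Real.rpow_add ht0]
      congr 1
      ring
    rw [smul_eq_mul, h3, hg, hf]
    simp only
    rw [h1, h2, h4, h5]
    ring
  constructor
  · have hiff := integrableOn_image_iff_integrableOn_abs_deriv_smul
      measurableSet_Ioi hderiv hinj g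
    rw [himg] at hiff
    have hbase : IntegrableOn
        (fun t : ℝ => a * b ^ (n+1) * (t ^ ((n + 1 : ℝ) * a - 1) * Real.exp (-t)))
        (Set.Ioi X) := Integrable.const_mul (gammaInt hp hX) _
    exact hiff.mpr (hbase.congr_fun (fun t ht => (hpt t ht).symm) measurableSet_Ioi)
  · have hval := integral_image_eq_integral_abs_deriv_smul measurableSet_Ioi hderiv hinj g
    rw [himg] at hval
    rw [hval, setIntegral_congr_fun measurableSet_Ioi hpt, MeasureTheory.integral_const_mul]
    rfl

lemma sq_int {a b : ℝ} {s : Set ℝ} (d κ : ℝ)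
    (h0 : IntegrableOn (fun x : ℝ => x ^ 0 * Real.exp (-(x / b) ^ (1 / a))) s)
    (h1 : IntegrableOn (fun x : ℝ => x ^ 1 * Real.exp (-(x / b) ^ (1 / a))) s)
    (h2 : IntegrableOn (fun x : ℝ => x ^ 2 * Real.exp (-(x / b) ^ (1 / a))) s) :
    IntegrableOn (fun x : ℝ => κ * ((x + d) ^ 2 * Real.exp (-(x / b) ^ (1 / a)))) s := by
  have heq : (fun x : ℝ => κ * ((x + d) ^ 2 * Real.exp (-(x / b) ^ (1 / a))))
      = fun x : ℝ => κ * (x ^ 2 * Real.exp (-(x / b) ^ (1 / a)))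
        + ((2 * κ * d) * (x ^ 1 * Real.exp (-(x / b) ^ (1 / a)))
          + (κ * d ^ 2) * (x ^ 0 * Real.exp (-(x / b) ^ (1 / a)))) := funext fun x => by ring
  rw [heq]
  exact (Integrable.const_mul h2 κ).add
    ((Integrable.const_mul h1 _).add (Integrable.const_mul h0 _))

lemma sq_expand {a b : ℝ} {s : Set ℝ} (d : ℝ)
    (h0 : IntegrableOn (fun x : ℝ => x ^ 0 * Real.exp (-(x / b) ^ (1 / a))) s)
    (h1 : IntegrableOn (fun x : ℝ => x ^ 1 * Real.exp (-(x / b) ^ (1 / a))) s)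
    (h2 : IntegrableOn (fun x : ℝ => x ^ 2 * Real.exp (-(x / b) ^ (1 / a))) s) :
    ∫ x in s, (x + d) ^ 2 * Real.exp (-(x / b) ^ (1 / a))
      = (∫ x in s, x ^ 2 * Real.exp (-(x / b) ^ (1 / a)))
        + 2 * d * (∫ x in s, x ^ 1 * Real.exp (-(x / b) ^ (1 / a)))
        + d ^ 2 * (∫ x in s, x ^ 0 * Real.exp (-(x / b) ^ (1 / a))) := by
  have heq : (fun x : ℝ => (x + d) ^ 2 * Real.exp (-(x / b) ^ (1 / a)))
      = fun x : ℝ => (x ^ 2 * Real.exp (-(x / b) ^ (1 / a)))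
        + ((2 * d) * (x ^ 1 * Real.exp (-(x / b) ^ (1 / a)))
          + (d ^ 2) * (x ^ 0 * Real.exp (-(x / b) ^ (1 / a)))) := funext fun x => by ring
  have ha1 : Integrable (fun x : ℝ => 2 * d * (x ^ 1 * Real.exp (-(x / b) ^ (1 / a))))
      (volume.restrict s) := Integrable.const_mul h1 (2 * d)
  have ha0 : Integrable (fun x : ℝ => d ^ 2 * (x ^ 0 * Real.exp (-(x / b) ^ (1 / a))))
      (volume.restrict s) := Integrable.const_mul h0 (d ^ 2)
  have hsum : Integrable (fun x : ℝ => 2 * d * (x ^ 1 * Real.exp (-(x / b) ^ (1 / a)))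
      + d ^ 2 * (x ^ 0 * Real.exp (-(x / b) ^ (1 / a)))) (volume.restrict s) := ha1.add ha0
  rw [heq, integral_add h2 hsum, integral_add ha1 ha0,
    MeasureTheory.integral_const_mul, MeasureTheory.integral_const_mul]
  ring

theorem second_moment_nonneg (a b k₁ k₂ : ℝ) (ha : 0 < a) (hb : 0 < b)
    (c : ℝ) (hc : 0 ≤ c) :
    ∫ z, (asymLoss k₁ k₂ (z + c)) ^ 2 * genGauss a b z =
      (k₁ ^ 2 + k₂ ^ 2) * c ^ 2 / 2
      + Sgn c * ((k₁ ^ 2 - k₂ ^ 2) * c ^ 2 / (2 * Real.Gamma a))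
          * lowerGamma a (|c / b| ^ (1 / a))
      + (k₁ ^ 2 - k₂ ^ 2) * b * c / Real.Gamma a * upperGamma (2 * a) (|c / b| ^ (1 / a))
      + (k₁ ^ 2 + k₂ ^ 2) * b ^ 2 * Real.Gamma (3 * a) / (2 * Real.Gamma a)
      + Sgn c * ((k₁ ^ 2 - k₂ ^ 2) * b ^ 2 / (2 * Real.Gamma a))
          * lowerGamma (3 * a) (|c / b| ^ (1 / a)) := by
  have hga : 0 < Real.Gamma a := Real.Gamma_pos_of_pos ha
  set K : ℝ := (2 * a * b * Real.Gamma a)⁻¹ with hK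
  set X : ℝ := (c / b) ^ (1 / a) with hXdef
  have hcb : (0:ℝ) ≤ c / b := by positivity
  have hX : 0 ≤ X := Real.rpow_nonneg hcb _
  have hbX : b * X ^ a = c := by
    rw [hXdef, ← Real.rpow_mul hcb, one_div, inv_mul_cancel₀ ha.ne', Real.rpow_one,
      mul_div_cancel₀ _ hb.ne']
  have hb0 : b * (0:ℝ) ^ a = 0 := by rw [Real.zero_rpow ha.ne', mul_zero]
  -- the three families of basic integrals
  have hU : ∀ n : ℕ,
      IntegrableOn (fun z : ℝ => z ^ n * Real.exp (-(z / b) ^ (1 / a))) (Set.Ioi c) ∧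
      ∫ z in Ioi c, z ^ n * Real.exp (-(z / b) ^ (1 / a))
        = a * b ^ (n + 1) * upperGamma ((n + 1 : ℝ) * a) X := by
    intro n
    have := cov ha hb n hX
    rwa [hbX] at this
  have hG : ∀ n : ℕ,
      IntegrableOn (fun z : ℝ => z ^ n * Real.exp (-(z / b) ^ (1 / a))) (Set.Ioi 0) ∧
      ∫ z in Ioi (0:ℝ), z ^ n * Real.exp (-(z / b) ^ (1 / a))
        = a * b ^ (n + 1) * Real.Gamma ((n + 1 : ℝ) * a) := by
    intro n
    have := cov ha hb n (le_refl (0:ℝ))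
    rw [hb0, upperGamma_zero (by positivity)] at this
    exact this
  have hLI : ∀ n : ℕ,
      IntegrableOn (fun z : ℝ => z ^ n * Real.exp (-(z / b) ^ (1 / a))) (Set.Ioc 0 c) :=
    fun n => (hG n).1.mono_set Ioc_subset_Ioi_self
  have hL : ∀ n : ℕ,
      ∫ z in Ioc (0:ℝ) c, z ^ n * Real.exp (-(z / b) ^ (1 / a))
        = a * b ^ (n + 1) * (Real.Gamma ((n + 1 : ℝ) * a) - upperGamma ((n + 1 : ℝ) * a) X) := by
    intro n
    have hsp := setIntegral_union (Ioc_disjoint_Ioi (le_refl c)) measurableSet_Ioi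
      (hLI n) (hU n).1
    rw [Ioc_union_Ioi_eq_Ioi hc] at hsp
    rw [mul_sub]
    linarith [hsp, (hU n).2, (hG n).2]
  set F : ℝ → ℝ := fun z => (asymLoss k₁ k₂ (z + c)) ^ 2 * genGauss a b z with hF
  set G : ℝ → ℝ := fun x => F (-x) with hGdef
  -- pointwise identifications
  have hR : ∀ x ∈ Ioi (0:ℝ),
      F x = (K * k₁ ^ 2) * ((x + c) ^ 2 * Real.exp (-(x / b) ^ (1 / a))) := by
    intro x hx
    have hx0 : 0 < x := hx
    have : |x / b| = x / b := abs_of_nonneg (by positivity)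
    rw [hF]
    simp only [asymLoss, genGauss, if_pos (by linarith : (0:ℝ) ≤ x + c), this]
    rw [hK]
    ring
  have hQ : ∀ x ∈ Ioc (0:ℝ) c,
      G x = (K * k₁ ^ 2) * ((x + -c) ^ 2 * Real.exp (-(x / b) ^ (1 / a))) := by
    intro x hx
    have hx0 : 0 < x := hx.1
    have habs : |(-x) / b| = x / b := by
      rw [neg_div, abs_neg, abs_of_nonneg (by positivity)]
    rw [hGdef]
    simp only [hF, asymLoss, genGauss, if_pos (by linarith [hx.2] : (0:ℝ) ≤ -x + c), habs]
    ring
  have hP : ∀ x ∈ Ioi c,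
      G x = (K * k₂ ^ 2) * ((x + -c) ^ 2 * Real.exp (-(x / b) ^ (1 / a))) := by
    intro x hx
    have hx0 : 0 < x := lt_of_le_of_lt hc hx
    have habs : |(-x) / b| = x / b := by
      rw [neg_div, abs_neg, abs_of_nonneg (by positivity)]
    rw [hGdef]
    have hneg : ¬ (0:ℝ) ≤ -x + c := by
      push_neg
      linarith [mem_Ioi.mp hx]
    simp only [hF, asymLoss, genGauss, if_neg hneg, habs]
    ring
  -- integrability
  have iR : IntegrableOn F (Ioi 0) :=
    (sq_int c (K * k₁ ^ 2) (hG 0).1 (hG 1).1 (hG 2).1).congr_fun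
      (fun x hx => (hR x hx).symm) measurableSet_Ioi
  have iQ : IntegrableOn G (Ioc 0 c) :=
    (sq_int (-c) (K * k₁ ^ 2) (hLI 0) (hLI 1) (hLI 2)).congr_fun
      (fun x hx => (hQ x hx).symm) measurableSet_Ioc
  have iP : IntegrableOn G (Ioi c) :=
    (sq_int (-c) (K * k₂ ^ 2) (hU 0).1 (hU 1).1 (hU 2).1).congr_fun
      (fun x hx => (hP x hx).symm) measurableSet_Ioi
  have iG : IntegrableOn G (Ioi 0) := by
    rw [← Ioc_union_Ioi_eq_Ioi hc]
    exact iQ.union iP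
  have iL : IntegrableOn F (Iic 0) := by
    have A : MeasurableEmbedding (fun x : ℝ => -x) :=
      (Homeomorph.neg ℝ).isClosedEmbedding.measurableEmbedding
    have := (Measure.measurePreserving_neg (volume : Measure ℝ)).integrableOn_comp_preimage
      (f := F) (s := Iic (0:ℝ)) A
    rw [show (fun x : ℝ => -x) ⁻¹' (Iic (0:ℝ)) = Ici 0 by ext x; simp] at this
    rw [← this]
    rw [integrableOn_Ici_iff_integrableOn_Ioi]
    exact iG
  -- split and compute
  have hIic : ∫ x in Iic (0:ℝ), F x = ∫ x in Ioi (0:ℝ), G x := by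
    have := integral_comp_neg_Ioi 0 F
    rw [neg_zero] at this
    exact this.symm
  have hsplitG : ∫ x in Ioi (0:ℝ), G x = (∫ x in Ioc (0:ℝ) c, G x) + ∫ x in Ioi c, G x := by
    rw [← Ioc_union_Ioi_eq_Ioi hc, setIntegral_union (Ioc_disjoint_Ioi le_rfl)
      measurableSet_Ioi iQ iP]
  have eR : ∫ x in Ioi (0:ℝ), F x
      = (K * k₁ ^ 2) * ((∫ x in Ioi (0:ℝ), x ^ 2 * Real.exp (-(x / b) ^ (1 / a)))
        + 2 * c * (∫ x in Ioi (0:ℝ), x ^ 1 * Real.exp (-(x / b) ^ (1 / a)))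
        + c ^ 2 * (∫ x in Ioi (0:ℝ), x ^ 0 * Real.exp (-(x / b) ^ (1 / a)))) := by
    rw [setIntegral_congr_fun measurableSet_Ioi hR, MeasureTheory.integral_const_mul,
      sq_expand c (hG 0).1 (hG 1).1 (hG 2).1]
  have eQ : ∫ x in Ioc (0:ℝ) c, G x
      = (K * k₁ ^ 2) * ((∫ x in Ioc (0:ℝ) c, x ^ 2 * Real.exp (-(x / b) ^ (1 / a)))
        + 2 * (-c) * (∫ x in Ioc (0:ℝ) c, x ^ 1 * Real.exp (-(x / b) ^ (1 / a)))
        + (-c) ^ 2 * (∫ x in Ioc (0:ℝ) c, x ^ 0 * Real.exp (-(x / b) ^ (1 / a)))) := by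
    rw [setIntegral_congr_fun measurableSet_Ioc hQ, MeasureTheory.integral_const_mul,
      sq_expand (-c) (hLI 0) (hLI 1) (hLI 2)]
  have eP : ∫ x in Ioi c, G x
      = (K * k₂ ^ 2) * ((∫ x in Ioi c, x ^ 2 * Real.exp (-(x / b) ^ (1 / a)))
        + 2 * (-c) * (∫ x in Ioi c, x ^ 1 * Real.exp (-(x / b) ^ (1 / a)))
        + (-c) ^ 2 * (∫ x in Ioi c, x ^ 0 * Real.exp (-(x / b) ^ (1 / a)))) := by
    rw [setIntegral_congr_fun measurableSet_Ioi hP, MeasureTheory.integral_const_mul,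
      sq_expand (-c) (hU 0).1 (hU 1).1 (hU 2).1]
  have htotal : ∫ z, F z = (∫ x in Iic (0:ℝ), F x) + ∫ x in Ioi (0:ℝ), F x :=
    (intervalIntegral.integral_Iic_add_Ioi iL iR).symm
  -- now plug in all values
  have u1 := (hU 0).2
  have u2 := (hU 1).2
  have u3 := (hU 2).2
  have g1 := (hG 0).2
  have g2 := (hG 1).2
  have g3 := (hG 2).2
  have l1 := hL 0
  have l2 := hL 1
  have l3 := hL 2
  have habsc : |c / b| = c / b := abs_of_nonneg hcb
  have hSgn : Sgn c = 1 := if_pos hc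
  have hlow1 : lowerGamma a X = Real.Gamma a - upperGamma a X :=
    lowerGamma_eq ha hX
  have hlow3 : lowerGamma (3 * a) X = Real.Gamma (3 * a) - upperGamma (3 * a) X :=
    lowerGamma_eq (by positivity) hX
  rw [hF] at htotal ⊢
  rw [htotal, hIic, hsplitG, eR, eQ, eP, u1, u2, u3, g1, g2, g3, l1, l2, l3,
    habsc, ← hXdef, hSgn, hlow1, hlow3, hK]
  norm_num
  field_simp
  ring

lemma asymLoss_neg (k₁ k₂ z : ℝ) : asymLoss k₁ k₂ (-z) = asymLoss k₂ k₁ z := by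
  simp only [asymLoss]
  rcases lt_trichotomy z 0 with h | h | h
  · rw [if_pos (by linarith), if_neg (not_le.mpr h)]
    ring
  · simp [h]
  · rw [if_neg (not_le.mpr (by linarith)), if_pos h.le]
    ring

lemma genGauss_neg (a b z : ℝ) : genGauss a b (-z) = genGauss a b z := by
  simp only [genGauss, neg_div, abs_neg]

theorem second_moment_shifted_loss (a b k₁ k₂ : ℝ) (ha : 0 < a) (hb : 0 < b)
    (hk₁ : 0 < k₁) (hk₂ : 0 < k₂) (c : ℝ) :
    ∫ z, (asymLoss k₁ k₂ (z + c)) ^ 2 * genGauss a b z =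
      (k₁ ^ 2 + k₂ ^ 2) * c ^ 2 / 2
      + Sgn c * ((k₁ ^ 2 - k₂ ^ 2) * c ^ 2 / (2 * Real.Gamma a))
          * lowerGamma a (|c / b| ^ (1 / a))
      + (k₁ ^ 2 - k₂ ^ 2) * b * c / Real.Gamma a * upperGamma (2 * a) (|c / b| ^ (1 / a))
      + (k₁ ^ 2 + k₂ ^ 2) * b ^ 2 * Real.Gamma (3 * a) / (2 * Real.Gamma a)
      + Sgn c * ((k₁ ^ 2 - k₂ ^ 2) * b ^ 2 / (2 * Real.Gamma a))
          * lowerGamma (3 * a) (|c / b| ^ (1 / a)) := by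
  rcases le_or_gt 0 c with hc | hc
  · exact second_moment_nonneg a b k₁ k₂ ha hb c hc
  · have hL : (∫ z, (asymLoss k₁ k₂ (z + c)) ^ 2 * genGauss a b z)
        = ∫ z, (asymLoss k₂ k₁ (z + -c)) ^ 2 * genGauss a b z := by
      rw [← integral_neg_eq_self (fun z => (asymLoss k₁ k₂ (z + c)) ^ 2 * genGauss a b z) volume]
      congr 1
      funext z
      rw [genGauss_neg, show -z + c = -(z + -c) by ring, asymLoss_neg]
    rw [hL, second_moment_nonneg a b k₂ k₁ ha hb (-c) (by linarith)]
    have hS1 : Sgn (-c) = 1 := if_pos (by linarith)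
    have hS2 : Sgn c = -1 := if_neg (not_le.mpr hc)
    have habs : |(-c) / b| = |c / b| := by rw [neg_div, abs_neg]
    rw [hS1, hS2, habs]
    ring
end

section
/- The expected value of the unshifted asymmetric loss satisfies ∫_{-∞}^{∞} L(z) · f(z) dz = (k₁ + k₂)·b·Γ(2a) / (2·Γ(a)). -/
open Real MeasureTheory Filter

lemma intOn_rpow_exp {p q : ℝ} (hp : 0 < p) (hq : -1 < q) :
    IntegrableOn (fun x : ℝ => x ^ q * Real.exp (-(x ^ p))) (Set.Ioi 0) := by
  have h0 : 0 < (q + 1) / p := div_pos (by linarith) hp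
  have hG := Real.GammaIntegral_convergent h0
  have h2 := (integrableOn_Ioi_comp_rpow_iff'
      (fun y => Real.exp (-y) * y ^ ((q + 1) / p - 1)) hp.ne').2 hG
  refine h2.congr_fun (fun x hx => ?_) measurableSet_Ioi
  have hx0 : (0:ℝ) < x := hx
  have h3 : (x ^ p) ^ ((q + 1) / p - 1) = x ^ (q + 1 - p) := by
    rw [← Real.rpow_mul hx0.le]
    congr 1
    field_simp
  beta_reduce
  rw [smul_eq_mul, h3]
  rw [show x ^ (p - 1) * (Real.exp (-(x ^ p)) * x ^ (q + 1 - p))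
      = x ^ (p - 1) * x ^ (q + 1 - p) * Real.exp (-(x ^ p)) by ring,
    ← Real.rpow_add hx0]
  norm_num

lemma intOn_g {a b : ℝ} (ha : 0 < a) (hb : 0 < b) :
    IntegrableOn (fun z : ℝ => z * Real.exp (-((z / b) ^ (1 / a)))) (Set.Ioi 0) := by
  have hp : 0 < 1 / a := by positivity
  have h1 : IntegrableOn (fun x : ℝ => b * (x ^ (1:ℝ) * Real.exp (-(x ^ (1/a)))))
      (Set.Ioi 0) := ((intOn_rpow_exp hp (by norm_num)).const_mul b)
  have h2 := (integrableOn_Ioi_comp_mul_left_iff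
      (fun x => b * (x ^ (1:ℝ) * Real.exp (-(x ^ (1/a))))) 0 (inv_pos.2 hb)).2
      (by simpa using h1)
  refine h2.congr_fun (fun x hx => ?_) measurableSet_Ioi
  have hx0 : (0:ℝ) < x := hx
  have hbx : b⁻¹ * x = x / b := by field_simp
  simp only [hbx, Real.rpow_one]
  field_simp

lemma val_g {a b : ℝ} (ha : 0 < a) (hb : 0 < b) :
    ∫ z in Set.Ioi (0:ℝ), z * Real.exp (-((z / b) ^ (1 / a)))
      = b ^ 2 * (a * Real.Gamma (2 * a)) := by
  have hp : 0 < 1 / a := by positivity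
  have hval : ∫ x in Set.Ioi (0:ℝ), x ^ (1:ℝ) * Real.exp (-(x ^ (1/a)))
      = a * Real.Gamma (2 * a) := by
    rw [integral_rpow_mul_exp_neg_rpow hp (by norm_num), one_div_one_div]
    congr 1
    rw [one_div, div_eq_mul_inv, inv_inv]
    ring
  have h1 : ∫ z in Set.Ioi (0:ℝ), z * Real.exp (-((z / b) ^ (1 / a)))
      = ∫ z in Set.Ioi (0:ℝ), (fun x => b * (x ^ (1:ℝ) * Real.exp (-(x ^ (1/a))))) (b⁻¹ * z) := by
    refine setIntegral_congr_fun measurableSet_Ioi (fun x hx => ?_)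
    have hx0 : (0:ℝ) < x := hx
    have hbx : b⁻¹ * x = x / b := by field_simp
    simp only [hbx, Real.rpow_one]
    field_simp
  have h2 := integral_comp_mul_left_Ioi
      (fun x => b * (x ^ (1:ℝ) * Real.exp (-(x ^ (1/a))))) 0 (inv_pos.2 hb)
  rw [h1, h2, mul_zero, smul_eq_mul, inv_inv, integral_const_mul, hval]
  ring

theorem expected_unshifted_loss (a b k₁ k₂ : ℝ) (ha : 0 < a) (hb : 0 < b)
    (hk₁ : 0 < k₁) (hk₂ : 0 < k₂) :
    ∫ z, asymLoss k₁ k₂ z * genGauss a b z =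
      (k₁ + k₂) * b * Real.Gamma (2 * a) / (2 * Real.Gamma a) := by
  set c : ℝ := (2 * a * b * Real.Gamma a)⁻¹ with hc
  set g : ℝ → ℝ := fun z => z * Real.exp (-((z / b) ^ (1 / a))) with hg
  have hGa : 0 < Real.Gamma a := Real.Gamma_pos_of_pos ha
  have hg_int : IntegrableOn g (Set.Ioi 0) := intOn_g ha hb
  have hg_val : ∫ z in Set.Ioi (0:ℝ), g z = b ^ 2 * (a * Real.Gamma (2 * a)) := val_g ha hb
  -- equality of F with the right expressions on each half line
  have hIoi_eq : Set.EqOn (fun z => asymLoss k₁ k₂ z * genGauss a b z)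
      (fun z => (k₁ * c) * g z) (Set.Ioi 0) := by
    intro z hz
    have hz0 : (0:ℝ) < z := hz
    simp only [asymLoss, genGauss, if_pos hz0.le, hg, ← hc]
    rw [abs_of_nonneg (by positivity : (0:ℝ) ≤ z / b)]
    ring
  have hIic_eq : Set.EqOn (fun z => asymLoss k₁ k₂ z * genGauss a b z)
      (fun z => (k₂ * c) * g (-z)) (Set.Iic 0) := by
    intro z hz
    have hz0 : z ≤ 0 := hz
    have habs : |z / b| = -z / b := by
      rw [abs_of_nonpos (div_nonpos_of_nonpos_of_nonneg hz0 hb.le)]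
      ring
    simp only [asymLoss, genGauss, hg, ← hc, habs]
    rcases eq_or_lt_of_le hz0 with h | h
    · subst h
      norm_num
    · rw [if_neg (not_le.2 h)]
      ring
  -- integrability on the two halves
  have hIoi_int : IntegrableOn (fun z => asymLoss k₁ k₂ z * genGauss a b z) (Set.Ioi 0) := by
    have h1 : IntegrableOn (fun z => (k₁ * c) * g z) (Set.Ioi 0) := hg_int.const_mul _
    exact h1.congr_fun (fun x hx => (hIoi_eq hx).symm) measurableSet_Ioi
  have hGneg : IntegrableOn (fun z => (k₂ * c) * g (-z)) (Set.Iic 0) := by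
    have hIci : IntegrableOn (fun z => (k₂ * c) * g z) (Set.Ici 0) := by
      rw [integrableOn_Ici_iff_integrableOn_Ioi]
      exact hg_int.const_mul _
    rw [← integrable_indicator_iff measurableSet_Iic]
    have h2 := ((integrable_indicator_iff measurableSet_Ici).2 hIci).comp_neg
    refine Integrable.congr h2 (Filter.Eventually.of_forall fun x => ?_)
    by_cases hx : x ≤ 0
    · simp [Set.indicator, neg_nonneg.2 hx, hx]
    · simp [Set.indicator, hx, fun h' => hx (neg_nonneg.1 h')]
  have hIic_int : IntegrableOn (fun z => asymLoss k₁ k₂ z * genGauss a b z) (Set.Iic 0) :=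
    hGneg.congr_fun (fun x hx => (hIic_eq hx).symm) measurableSet_Iic
  -- split the integral
  rw [← intervalIntegral.integral_Iic_add_Ioi (b := (0:ℝ)) hIic_int hIoi_int]
  rw [setIntegral_congr_fun measurableSet_Iic hIic_eq,
    setIntegral_congr_fun measurableSet_Ioi hIoi_eq]
  have hneg : ∫ z in Set.Iic (0:ℝ), (k₂ * c) * g (-z) = ∫ z in Set.Ioi (0:ℝ), (k₂ * c) * g z := by
    have := integral_comp_neg_Ioi (E := ℝ) 0 (fun z => (k₂ * c) * g (-z))
    simp only [neg_neg, neg_zero] at this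
    exact this.symm
  rw [hneg, integral_const_mul, integral_const_mul, hg_val, hc]
  have ha' : a ≠ 0 := ha.ne'
  have hb' : b ≠ 0 := hb.ne'
  have hGa' : Real.Gamma a ≠ 0 := hGa.ne'
  field_simp
  ring
end

section
/- The variance of the unshifted asymmetric loss satisfies ∫ L(z)²·f(z) dz − (∫ L(z)·f(z) dz)² = (k₁² + k₂²)·b²·Γ(3a) / (2·Γ(a)) − (k₁ + k₂)²·b²·Γ(2a)² / (4·Γ(a)²). -/
open Real MeasureTheory Filter

open Set

private lemma gg_intOn {a b s : ℝ} (ha : 0 < a) (hb : 0 < b) (hs : -1 < s) :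
    IntegrableOn (fun z : ℝ => z ^ s * Real.exp (-(|z / b|) ^ (1 / a))) (Ioi 0) := by
  rw [← integrableOn_Ioi_comp_rpow_iff' _ (ne_of_gt ha)]
  have base : IntegrableOn
      (fun x : ℝ => x ^ (a * (s + 1) - 1) * Real.exp (-(b ^ (-(1/a))) * x)) (Ioi 0) := by
    have h := integrableOn_rpow_mul_exp_neg_mul_rpow (p := 1) (s := a * (s+1) - 1)
      (b := b ^ (-(1/a))) (by nlinarith) one_pos (rpow_pos_of_pos hb _)
    simpa using h
  refine base.congr_fun (fun x hx => ?_) measurableSet_Ioi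
  have hx0 : (0:ℝ) < x := hx
  have hxa : (0:ℝ) < x ^ a := rpow_pos_of_pos hx0 a
  have habs : |x ^ a / b| = x ^ a / b := abs_of_nonneg (by positivity)
  have e1 : ((x:ℝ) ^ a) ^ (1/a) = x := by
    rw [← rpow_mul hx0.le, mul_one_div_cancel (ne_of_gt ha), rpow_one]
  have e2 : ((x:ℝ) ^ a) ^ s = x ^ (a * s) := (rpow_mul hx0.le a s).symm
  have e3 : a * (s + 1) - 1 = a - 1 + a * s := by ring
  beta_reduce
  rw [smul_eq_mul, habs, div_rpow hxa.le hb.le, e1, e2, e3, rpow_add hx0, rpow_neg hb.le]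
  ring_nf

private lemma gg_intVal {a b s : ℝ} (ha : 0 < a) (hb : 0 < b) (hs : -1 < s) :
    ∫ z in Ioi (0:ℝ), z ^ s * Real.exp (-(|z / b|) ^ (1 / a))
      = a * b ^ (s + 1) * Real.Gamma ((s + 1) * a) := by
  have h1 : ∀ z ∈ Ioi (0:ℝ), z ^ s * Real.exp (-(|z / b|) ^ (1 / a))
      = z ^ s * Real.exp (-(b ^ (-(1/a)) : ℝ) * z ^ (1/a)) := by
    intro z hz
    have hz0 : (0:ℝ) < z := hz
    rw [abs_of_nonneg (by positivity : (0:ℝ) ≤ z / b), div_rpow hz0.le hb.le, rpow_neg hb.le]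
    ring_nf
  rw [setIntegral_congr_fun measurableSet_Ioi h1,
    integral_rpow_mul_exp_neg_mul_rpow (one_div_pos.mpr ha) hs (rpow_pos_of_pos hb _),
    ← rpow_mul hb.le]
  have e1 : -(1/a) * (-(s+1)/(1/a)) = s + 1 := by field_simp
  have e2 : (s+1)/(1/a) = (s+1)*a := by field_simp
  rw [e1, e2, one_div_one_div]
  ring

private lemma intOn_of_neg {f : ℝ → ℝ} (h : IntegrableOn (fun x => f (-x)) (Ici (0:ℝ))) :
    IntegrableOn f (Iic (0:ℝ)) := by
  have m : MeasurableEmbedding fun x : ℝ => -x := (Homeomorph.neg ℝ).measurableEmbedding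
  rw [← Measure.map_neg_eq_self (volume : Measure ℝ), m.integrableOn_map_iff]
  simp_rw [Function.comp_def, neg_preimage, neg_Iic, neg_zero]
  exact h

private lemma full_integral (a b k₁ k₂ : ℝ) (ha : 0 < a) (hb : 0 < b) (n : ℕ) :
    ∫ z, (asymLoss k₁ k₂ z) ^ n * genGauss a b z
      = (k₁ ^ n + k₂ ^ n) * ((2 * a * b * Real.Gamma a)⁻¹
          * (a * b ^ ((n:ℝ) + 1) * Real.Gamma (((n:ℝ) + 1) * a))) := by
  set C : ℝ := (2 * a * b * Real.Gamma a)⁻¹ with hC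
  set F : ℝ → ℝ := fun z => (asymLoss k₁ k₂ z) ^ n * genGauss a b z with hF
  have hn : (-1:ℝ) < (n:ℝ) := lt_of_lt_of_le neg_one_lt_zero (Nat.cast_nonneg n)
  have hbase := gg_intOn (b := b) (s := (n:ℝ)) ha hb hn
  have heqIoi : ∀ z ∈ Ioi (0:ℝ),
      (C * k₁ ^ n) * (z ^ ((n:ℝ)) * Real.exp (-(|z / b|) ^ (1 / a))) = F z := by
    intro z hz
    simp only [hF, asymLoss, genGauss, if_pos (le_of_lt (mem_Ioi.mp hz)), rpow_natCast]
    ring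
  have heqneg : ∀ x ∈ Ioi (0:ℝ),
      (C * k₂ ^ n) * (x ^ ((n:ℝ)) * Real.exp (-(|x / b|) ^ (1 / a))) = F (-x) := by
    intro x hx
    have hx0 : (0:ℝ) < x := hx
    have : ¬ (0 ≤ -x) := by linarith
    simp only [hF, asymLoss, genGauss, if_neg this, rpow_natCast, neg_div, abs_neg]
    ring
  have hIoi : IntegrableOn F (Ioi 0) := by
    refine IntegrableOn.congr_fun ?_ (fun z hz => heqIoi z hz) measurableSet_Ioi
    exact hbase.const_mul (C * k₁ ^ n)
  have hIic : IntegrableOn F (Iic 0) := by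
    apply intOn_of_neg
    rw [integrableOn_Ici_iff_integrableOn_Ioi]
    refine IntegrableOn.congr_fun ?_ (fun x hx => heqneg x hx) measurableSet_Ioi
    exact hbase.const_mul (C * k₂ ^ n)
  have vIoi : ∫ z in Ioi (0:ℝ), F z
      = (C * k₁ ^ n) * (a * b ^ ((n:ℝ) + 1) * Real.Gamma (((n:ℝ) + 1) * a)) := by
    rw [setIntegral_congr_fun measurableSet_Ioi (fun z hz => (heqIoi z hz).symm),
      integral_const_mul, gg_intVal ha hb hn]
  have vIic : ∫ z in Iic (0:ℝ), F z
      = (C * k₂ ^ n) * (a * b ^ ((n:ℝ) + 1) * Real.Gamma (((n:ℝ) + 1) * a)) := by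
    have h0 : ∫ z in Iic (0:ℝ), F z = ∫ x in Ioi (0:ℝ), F (-x) := by
      have := integral_comp_neg_Iic (0:ℝ) (fun x => F (-x))
      simpa [neg_neg] using this
    rw [h0, setIntegral_congr_fun measurableSet_Ioi (fun x hx => (heqneg x hx).symm),
      integral_const_mul, gg_intVal ha hb hn]
  rw [← intervalIntegral.integral_Iic_add_Ioi hIic hIoi, vIic, vIoi]
  ring

theorem variance_unshifted_loss (a b k₁ k₂ : ℝ) (ha : 0 < a) (hb : 0 < b)
    (hk₁ : 0 < k₁) (hk₂ : 0 < k₂) :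
    (∫ z, (asymLoss k₁ k₂ z) ^ 2 * genGauss a b z)
      - (∫ z, asymLoss k₁ k₂ z * genGauss a b z) ^ 2 =
      (k₁ ^ 2 + k₂ ^ 2) * b ^ 2 * Real.Gamma (3 * a) / (2 * Real.Gamma a)
      - (k₁ + k₂) ^ 2 * b ^ 2 * Real.Gamma (2 * a) ^ 2 / (4 * Real.Gamma a ^ 2) := by
  have h2 := full_integral a b k₁ k₂ ha hb 2
  have h1 := full_integral a b k₁ k₂ ha hb 1
  simp only [pow_one] at h1
  rw [show ((2:ℕ):ℝ) + 1 = ((3:ℕ):ℝ) by norm_num, rpow_natCast] at h2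
  rw [show ((1:ℕ):ℝ) + 1 = ((2:ℕ):ℝ) by norm_num, rpow_natCast] at h1
  rw [h1, h2]
  have hG : 0 < Real.Gamma a := Real.Gamma_pos_of_pos ha
  rw [show ((3:ℕ):ℝ) * a = 3 * a by norm_num, show ((2:ℕ):ℝ) * a = 2 * a by norm_num]
  field_simp
  ring
end

section
/- The function c ↦ ∫_{-∞}^{∞} L(z + c) · f(z) dz is differentiable on ℝ and its derivative at every real c equals (k₁ − k₂)/2 + Sgn(c)·((k₁ + k₂)/(2·Γ(a)))·γ(a, |c/b|^{1/a}). -/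
open Real MeasureTheory Filter

open Set


lemma aux_cont_rpow {p : ℝ} (hp : 0 < p) : Continuous fun x : ℝ => x ^ p :=
  continuous_iff_continuousAt.mpr fun x => Real.continuousAt_rpow_const x p (Or.inr hp.le)

lemma aux_int_rpow {p s : ℝ} (hp : 0 < p) (hs : -1 < s) :
    IntegrableOn (fun x : ℝ => x ^ s * Real.exp (-x ^ p)) (Set.Ioi 0) := by
  have hq : 0 < (s + 1) / p := div_pos (by linarith) hp
  have h0 : IntegrableOn (fun u : ℝ => u ^ ((s + 1) / p - 1) * Real.exp (-u)) (Set.Ioi 0) := by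
    refine (Real.GammaIntegral_convergent hq).congr_fun (fun x _ => mul_comm _ _) measurableSet_Ioi
  have h1 := (integrableOn_Ioi_comp_rpow_iff'
      (fun u : ℝ => u ^ ((s + 1) / p - 1) * Real.exp (-u)) hp.ne').mpr h0
  refine h1.congr_fun (fun x hx => ?_) measurableSet_Ioi
  have hx0 : (0:ℝ) < x := hx
  dsimp only
  rw [smul_eq_mul, ← Real.rpow_mul hx0.le, ← mul_assoc, ← Real.rpow_add hx0,
    show p - 1 + p * ((s + 1) / p - 1) = s by field_simp; ring]

lemma aux_integrable_comp_abs {f : ℝ → ℝ} (hf : IntegrableOn f (Set.Ioi 0)) :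
    Integrable fun x => f |x| := by
  have hf' : IntegrableOn (fun x => f |x|) (Set.Ioi 0) :=
    hf.congr_fun (fun x hx => by rw [abs_of_pos hx]) measurableSet_Ioi
  have int_Iic : IntegrableOn (fun x ↦ f |x|) (Set.Iic 0) := by
    rw [← Measure.map_neg_eq_self (volume : Measure ℝ)]
    let m : MeasurableEmbedding fun x : ℝ => -x := (Homeomorph.neg ℝ).measurableEmbedding
    rw [m.integrableOn_map_iff]
    simp_rw [Function.comp_def, abs_neg, neg_preimage, neg_Iic, neg_zero]
    exact (integrableOn_Ici_iff_integrableOn_Ioi).mpr hf'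
  rw [← integrableOn_univ, ← Set.Iic_union_Ioi (a := (0:ℝ))]
  exact int_Iic.union hf'

lemma aux_f0_int {a b : ℝ} (ha : 0 < a) (hb : 0 < b) :
    IntegrableOn (fun z : ℝ => Real.exp (-(z / b) ^ (1 / a))) (Set.Ioi 0) := by
  have hp : 0 < 1 / a := by positivity
  have h0 : IntegrableOn (fun x : ℝ => Real.exp (-x ^ (1 / a))) (Set.Ioi 0) := by
    refine (aux_int_rpow hp (by norm_num : (-1:ℝ) < 0)).congr_fun (fun x _ => ?_) measurableSet_Ioi
    dsimp only
    rw [Real.rpow_zero, one_mul]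
  have := (integrableOn_Ioi_comp_mul_left_iff (fun x : ℝ => Real.exp (-x ^ (1 / a))) 0
    (inv_pos.mpr hb)).mpr (by rwa [mul_zero])
  refine this.congr_fun (fun x _ => by dsimp only; rw [inv_mul_eq_div]) measurableSet_Ioi

lemma aux_zf0_int {a b : ℝ} (ha : 0 < a) (hb : 0 < b) :
    IntegrableOn (fun z : ℝ => z * Real.exp (-(z / b) ^ (1 / a))) (Set.Ioi 0) := by
  have hp : 0 < 1 / a := by positivity
  have h0 : IntegrableOn (fun x : ℝ => x * Real.exp (-x ^ (1 / a))) (Set.Ioi 0) := by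
    refine (aux_int_rpow hp (by norm_num : (-1:ℝ) < 1)).congr_fun (fun x hx => ?_) measurableSet_Ioi
    dsimp only
    rw [Real.rpow_one]
  have h1 := (integrableOn_Ioi_comp_mul_left_iff (fun x : ℝ => x * Real.exp (-x ^ (1 / a))) 0
    (inv_pos.mpr hb)).mpr (by rwa [mul_zero])
  have h2 : IntegrableOn (fun x : ℝ => b * (b⁻¹ * x * Real.exp (-(b⁻¹ * x) ^ (1 / a))))
      (Set.Ioi 0) := h1.const_mul b
  refine h2.congr_fun (fun x _ => ?_) measurableSet_Ioi
  dsimp only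
  rw [inv_mul_eq_div]
  field_simp

lemma aux_f0_integral {a b : ℝ} (ha : 0 < a) (hb : 0 < b) :
    ∫ z in Set.Ioi (0:ℝ), Real.exp (-(z / b) ^ (1 / a)) = a * b * Real.Gamma a := by
  have hp : 0 < 1 / a := by positivity
  have h := integral_comp_mul_left_Ioi (fun x : ℝ => Real.exp (-x ^ (1 / a))) 0 (inv_pos.mpr hb)
  rw [mul_zero] at h
  have hcongr : ∫ z in Set.Ioi (0:ℝ), Real.exp (-(z / b) ^ (1 / a))
      = ∫ x in Set.Ioi (0:ℝ), Real.exp (-(b⁻¹ * x) ^ (1 / a)) :=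
    setIntegral_congr_fun measurableSet_Ioi (fun x _ => by rw [div_eq_inv_mul])
  rw [hcongr, h, integral_exp_neg_rpow hp, smul_eq_mul, inv_inv, one_div_one_div,
    Real.Gamma_add_one ha.ne']
  ring

lemma aux_interval (a b : ℝ) (ha : 0 < a) (hb : 0 < b) {x : ℝ} (hx : 0 ≤ x) :
    ∫ z in (0:ℝ)..x, Real.exp (-(z / b) ^ (1 / a))
      = a * b * lowerGamma a ((x / b) ^ (1 / a)) := by
  have hp : 0 < 1 / a := by positivity
  set X : ℝ := (x / b) ^ (1 / a) with hXdef
  have hX0 : 0 ≤ X := Real.rpow_nonneg (div_nonneg hx hb.le) _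
  have huIcc : Set.uIcc (0:ℝ) X = Set.Icc 0 X := Set.uIcc_of_le hX0
  have hmin : min (0:ℝ) X = 0 := min_eq_left hX0
  have hmax : max (0:ℝ) X = X := max_eq_right hX0
  have hconta : Continuous fun t : ℝ => t ^ a := aux_cont_rpow ha
  have hφcont : Continuous fun t : ℝ => b * t ^ a := continuous_const.mul hconta
  have hgcont : Continuous fun z : ℝ => Real.exp (-(z / b) ^ (1 / a)) := by
    exact Real.continuous_exp.comp ((aux_cont_rpow hp).comp (continuous_id.div_const b)).neg
  -- equality of integrands on Icc 0 X
  have heq : ∀ t ∈ Set.Icc (0:ℝ) X,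
      (fun t => b * (a * t ^ (a - 1))) t • (fun z => Real.exp (-(z / b) ^ (1 / a))) (b * t ^ a)
        = a * b * (t ^ (a - 1) * Real.exp (-t)) := by
    intro t ht
    have ht0 : 0 ≤ t := ht.1
    have h1 : b * t ^ a / b = t ^ a := by field_simp
    have h2 : (t ^ a) ^ (1 / a) = t := by
      rw [← Real.rpow_mul ht0, mul_one_div_cancel ha.ne', Real.rpow_one]
    simp only [smul_eq_mul, h1, h2]
    ring
  have key := intervalIntegral.integral_comp_smul_deriv'''
    (f := fun t : ℝ => b * t ^ a) (f' := fun t : ℝ => b * (a * t ^ (a - 1)))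
    (g := fun z : ℝ => Real.exp (-(z / b) ^ (1 / a))) (a := (0:ℝ)) (b := X)
    (hφcont.continuousOn)
    (by
      intro t ht
      rw [hmin, hmax] at ht
      exact (((Real.hasDerivAt_rpow_const (x := t) (p := a)
        (Or.inl ht.1.ne')).const_mul b).hasDerivWithinAt))
    (hgcont.continuousOn)
    (hgcont.continuousOn.integrableOn_compact (isCompact_uIcc.image hφcont))
    (by
      -- integrability of f' • g ∘ f on uIcc
      rw [huIcc]
      have hGint0 : IntegrableOn (fun t : ℝ => a * b * (t ^ (a - 1) * Real.exp (-t)))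
          (Set.Ioc 0 X) :=
        (((Real.GammaIntegral_convergent ha).mono_set
          Set.Ioc_subset_Ioi_self).congr_fun (fun t _ => mul_comm _ _)
          measurableSet_Ioc).const_mul (a * b)
      have hGint : IntegrableOn (fun t : ℝ => a * b * (t ^ (a - 1) * Real.exp (-t)))
          (Set.Icc 0 X) := (integrableOn_Icc_iff_integrableOn_Ioc).mpr hGint0
      exact hGint.congr_fun (fun t ht => (heq t ht).symm) measurableSet_Icc)
  have hφ0 : b * (0:ℝ) ^ a = 0 := by rw [Real.zero_rpow ha.ne', mul_zero]
  have hφX : b * X ^ a = x := by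
    rw [hXdef, ← Real.rpow_mul (div_nonneg hx hb.le), one_div_mul_cancel ha.ne',
      Real.rpow_one, mul_comm, div_mul_cancel₀ x hb.ne']
  simp only [Function.comp_def, smul_eq_mul] at key
  rw [hφ0, hφX] at key
  rw [← key]
  refine Eq.trans (intervalIntegral.integral_congr
    (g := fun t => a * b * (t ^ (a - 1) * Real.exp (-t))) ?_) ?_
  · intro t ht
    rw [huIcc] at ht
    have := heq t ht
    simpa [smul_eq_mul] using this
  · rw [intervalIntegral.integral_const_mul]; rfl

lemma aux_g_eq {b : ℝ} (hb : 0 < b) (z : ℝ) : |z / b| = |z| / b := by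
  rw [abs_div, abs_of_pos hb]

lemma aux_g_int {a b : ℝ} (ha : 0 < a) (hb : 0 < b) :
    Integrable (fun z : ℝ => Real.exp (-|z / b| ^ (1 / a))) := by
  have h := aux_integrable_comp_abs (aux_f0_int ha hb)
  refine h.congr (Filter.Eventually.of_forall fun z => ?_)
  simp only [aux_g_eq hb]

lemma aux_zg_int {a b : ℝ} (ha : 0 < a) (hb : 0 < b) :
    Integrable (fun z : ℝ => |z| * Real.exp (-|z / b| ^ (1 / a))) := by
  have h := aux_integrable_comp_abs (aux_zf0_int ha hb)
  refine h.congr (Filter.Eventually.of_forall fun z => ?_)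
  simp only [aux_g_eq hb]

lemma aux_g_total {a b : ℝ} (ha : 0 < a) (hb : 0 < b) :
    ∫ z : ℝ, Real.exp (-|z / b| ^ (1 / a)) = 2 * (a * b * Real.Gamma a) := by
  have h := integral_comp_abs (f := fun x : ℝ => Real.exp (-(x / b) ^ (1 / a)))
  rw [aux_f0_integral ha hb] at h
  rw [← h]
  exact integral_congr_ae (Filter.Eventually.of_forall fun z => by simp only [aux_g_eq hb])

lemma aux_tail {a b : ℝ} (ha : 0 < a) (hb : 0 < b) {u : ℝ} (hu : 0 ≤ u) :
    ∫ z in Set.Ioi u, Real.exp (-|z / b| ^ (1 / a))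
      = a * b * Real.Gamma a - a * b * lowerGamma a ((u / b) ^ (1 / a)) := by
  have h1 : ∫ z in Set.Ioi u, Real.exp (-|z / b| ^ (1 / a))
      = ∫ z in Set.Ioi u, Real.exp (-(z / b) ^ (1 / a)) := by
    refine setIntegral_congr_fun measurableSet_Ioi fun z hz => ?_
    rw [aux_g_eq hb, abs_of_nonneg (hu.trans (le_of_lt (Set.mem_Ioi.mp hz)))]
  have hioc : IntegrableOn (fun z : ℝ => Real.exp (-(z / b) ^ (1 / a))) (Set.Ioc 0 u) :=
    (aux_f0_int ha hb).mono_set Set.Ioc_subset_Ioi_self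
  have hioi : IntegrableOn (fun z : ℝ => Real.exp (-(z / b) ^ (1 / a))) (Set.Ioi u) :=
    (aux_f0_int ha hb).mono_set (Set.Ioi_subset_Ioi hu)
  have hsplit : (∫ z in Set.Ioc 0 u, Real.exp (-(z / b) ^ (1 / a)))
      + ∫ z in Set.Ioi u, Real.exp (-(z / b) ^ (1 / a))
      = ∫ z in Set.Ioi (0:ℝ), Real.exp (-(z / b) ^ (1 / a)) := by
    rw [← setIntegral_union (Set.Ioc_disjoint_Ioi le_rfl) measurableSet_Ioi hioc hioi,
      Set.Ioc_union_Ioi_eq_Ioi hu]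
  have hint : (∫ z in Set.Ioc 0 u, Real.exp (-(z / b) ^ (1 / a)))
      = a * b * lowerGamma a ((u / b) ^ (1 / a)) := by
    rw [← intervalIntegral.integral_of_le hu]
    exact aux_interval a b ha hb hu
  rw [h1, ← aux_f0_integral ha hb, ← hsplit, hint]
  ring

lemma aux_reflect {a b : ℝ} (hb : 0 < b) (u : ℝ) :
    ∫ z in Set.Iio (-u), Real.exp (-|z / b| ^ (1 / a))
      = ∫ z in Set.Ioi u, Real.exp (-|z / b| ^ (1 / a)) := by
  rw [← integral_Iic_eq_integral_Iio,
    ← integral_comp_neg_Ioi u (fun z : ℝ => Real.exp (-|z / b| ^ (1 / a)))]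
  refine setIntegral_congr_fun measurableSet_Ioi fun z _ => ?_
  rw [neg_div, abs_neg]

lemma aux_genGauss_eq (a b : ℝ) : genGauss a b
    = fun z => (2 * a * b * Real.Gamma a)⁻¹ * Real.exp (-|z / b| ^ (1 / a)) := rfl

lemma aux_gG_integrable {a b : ℝ} (ha : 0 < a) (hb : 0 < b) :
    Integrable (genGauss a b) := by
  rw [aux_genGauss_eq]
  exact (aux_g_int ha hb).const_mul _

lemma aux_gG_nonneg {a b : ℝ} (ha : 0 < a) (hb : 0 < b) (z : ℝ) : 0 ≤ genGauss a b z := by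
  have hΓ : 0 < Real.Gamma a := Real.Gamma_pos_of_pos ha
  rw [aux_genGauss_eq]
  positivity

lemma aux_gG_cont {a b : ℝ} (ha : 0 < a) (hb : 0 < b) : Continuous (genGauss a b) := by
  rw [aux_genGauss_eq]
  have hp : 0 < 1 / a := by positivity
  exact continuous_const.mul (Real.continuous_exp.comp
    ((aux_cont_rpow hp).comp ((continuous_id.div_const b).abs)).neg)

lemma aux_value (a b k₁ k₂ : ℝ) (ha : 0 < a) (hb : 0 < b) (c : ℝ) :
    ∫ z : ℝ, (if 0 ≤ z + c then k₁ else -k₂) * genGauss a b z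
      = (k₁ - k₂) / 2
        + Sgn c * ((k₁ + k₂) / (2 * Real.Gamma a)) * lowerGamma a (|c / b| ^ (1 / a)) := by
  have hΓ : 0 < Real.Gamma a := Real.Gamma_pos_of_pos ha
  set K : ℝ := (2 * a * b * Real.Gamma a)⁻¹ with hK
  set γ : ℝ := lowerGamma a (|c / b| ^ (1 / a)) with hγ
  have habs : |c / b| = |c| / b := aux_g_eq hb c
  have hgG := aux_gG_integrable ha hb
  -- split ℝ at -c
  have h_left : IntegrableOn (fun z : ℝ => (if 0 ≤ z + c then k₁ else -k₂) * genGauss a b z)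
      (Iio (-c)) := by
    refine ((hgG.const_mul (-k₂)).integrableOn).congr_fun (fun z hz => ?_) measurableSet_Iio
    rw [if_neg (by simp only [mem_Iio] at hz; linarith)]
  have h_right : IntegrableOn (fun z : ℝ => (if 0 ≤ z + c then k₁ else -k₂) * genGauss a b z)
      (Ici (-c)) := by
    refine ((hgG.const_mul k₁).integrableOn).congr_fun (fun z hz => ?_) measurableSet_Ici
    rw [if_pos (by simp only [mem_Ici] at hz; linarith)]
  have hsplit := intervalIntegral.integral_Iio_add_Ici (μ := volume)
    (f := fun z : ℝ => (if 0 ≤ z + c then k₁ else -k₂) * genGauss a b z) h_left h_right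
  have hsplitg := intervalIntegral.integral_Iio_add_Ici (μ := volume) (f := genGauss a b) (b := -c)
    hgG.integrableOn hgG.integrableOn
  have hleft_eq : ∫ z in Iio (-c), (if 0 ≤ z + c then k₁ else -k₂) * genGauss a b z
      = -k₂ * ∫ z in Iio (-c), genGauss a b z := by
    rw [← integral_const_mul]
    refine setIntegral_congr_fun measurableSet_Iio (fun z hz => ?_)
    rw [if_neg (by simp only [mem_Iio] at hz; linarith)]
  have hright_eq : ∫ z in Ici (-c), (if 0 ≤ z + c then k₁ else -k₂) * genGauss a b z
      = k₁ * ∫ z in Ici (-c), genGauss a b z := by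
    rw [← integral_const_mul]
    refine setIntegral_congr_fun measurableSet_Ici (fun z hz => ?_)
    rw [if_pos (by simp only [mem_Ici] at hz; linarith)]
  have htotal : ∫ z, genGauss a b z = K * (2 * (a * b * Real.Gamma a)) := by
    rw [aux_genGauss_eq, integral_const_mul, aux_g_total ha hb]
  -- the value of the left piece
  have hkey : ∫ z in Iio (-c), genGauss a b z
      = K * (a * b * Real.Gamma a - Sgn c * (a * b * γ)) := by
    rcases le_or_gt 0 c with hc | hc
    · have habs2 : |c| = c := abs_of_nonneg hc
      have h1 : ∫ z in Iio (-c), genGauss a b z = K * ∫ z in Iio (-c),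
          Real.exp (-|z / b| ^ (1 / a)) := by rw [aux_genGauss_eq, integral_const_mul]
      rw [h1, aux_reflect hb c, aux_tail ha hb hc, hγ, habs, habs2, Sgn, if_pos hc]
      ring
    · have habs2 : |c| = -c := abs_of_neg hc
      have hneg : (0:ℝ) ≤ -c := by linarith
      have h1 : ∫ z in Iio (-c), genGauss a b z
          = (∫ z, genGauss a b z) - ∫ z in Ici (-c), genGauss a b z := by
        rw [← hsplitg]; ring
      have h2 : ∫ z in Ici (-c), genGauss a b z = K * ∫ z in Ioi (-c),
          Real.exp (-|z / b| ^ (1 / a)) := by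
        rw [aux_genGauss_eq, integral_Ici_eq_integral_Ioi, integral_const_mul]
      rw [h1, h2, aux_tail ha hb hneg, htotal, hγ, habs, habs2, Sgn, if_neg (by linarith)]
      ring
  have hright_val : ∫ z in Ici (-c), genGauss a b z
      = K * (a * b * Real.Gamma a + Sgn c * (a * b * γ)) := by
    have := hsplitg
    rw [hkey, htotal] at this
    linarith
  rw [← hsplit, hleft_eq, hright_eq, hkey, hright_val, hK]
  have ha' : a ≠ 0 := ha.ne'
  have hb' : b ≠ 0 := hb.ne'
  have hΓ' : Real.Gamma a ≠ 0 := hΓ.ne'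
  field_simp
  ring

lemma aux_asymLoss_eq (k₁ k₂ y : ℝ) :
    asymLoss k₁ k₂ y = (k₁ - k₂) / 2 * y + (k₁ + k₂) / 2 * |y| := by
  unfold asymLoss
  rcases le_or_gt 0 y with h | h
  · rw [if_pos h, abs_of_nonneg h]; ring
  · rw [if_neg (not_le.mpr h), abs_of_neg h]; ring

lemma aux_asymLoss_lip {k₁ k₂ : ℝ} (hk₁ : 0 < k₁) (hk₂ : 0 < k₂) (u v : ℝ) :
    |asymLoss k₁ k₂ u - asymLoss k₁ k₂ v| ≤ (k₁ + k₂) * |u - v| := by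
  rw [aux_asymLoss_eq, aux_asymLoss_eq]
  have h1 : |(|u| - |v|)| ≤ |u - v| := abs_abs_sub_abs_le_abs_sub u v
  have h2 : |k₁ - k₂| ≤ k₁ + k₂ := by rw [abs_le]; constructor <;> linarith
  have h3 : (k₁ - k₂) / 2 * u + (k₁ + k₂) / 2 * |u| - ((k₁ - k₂) / 2 * v + (k₁ + k₂) / 2 * |v|)
      = (k₁ - k₂) / 2 * (u - v) + (k₁ + k₂) / 2 * (|u| - |v|) := by ring
  rw [h3]
  refine (abs_add_le _ _).trans ?_
  rw [abs_mul, abs_mul, abs_div, abs_div]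
  have h4 : |(2:ℝ)| = 2 := by norm_num
  have h5 : |k₁ + k₂| = k₁ + k₂ := abs_of_pos (by linarith)
  rw [h4, h5]
  nlinarith [abs_nonneg (u - v), abs_nonneg (k₁ - k₂)]

lemma aux_asymLoss_bound {k₁ k₂ : ℝ} (hk₁ : 0 < k₁) (hk₂ : 0 < k₂) (y : ℝ) :
    |asymLoss k₁ k₂ y| ≤ (k₁ + k₂) * |y| := by
  have h0 : asymLoss k₁ k₂ 0 = 0 := by unfold asymLoss; rw [if_pos le_rfl, mul_zero]
  have := aux_asymLoss_lip hk₁ hk₂ y 0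
  rwa [h0, sub_zero, sub_zero] at this

lemma aux_asymLoss_cont (k₁ k₂ : ℝ) : Continuous (asymLoss k₁ k₂) := by
  have : (asymLoss k₁ k₂) = fun y => (k₁ - k₂) / 2 * y + (k₁ + k₂) / 2 * |y| := by
    funext y; exact aux_asymLoss_eq k₁ k₂ y
  rw [this]
  exact (continuous_const.mul continuous_id).add (continuous_const.mul continuous_abs)

theorem hasDerivAt_expected_loss (a b k₁ k₂ : ℝ) (ha : 0 < a) (hb : 0 < b)
    (hk₁ : 0 < k₁) (hk₂ : 0 < k₂) (c : ℝ) :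
    HasDerivAt (fun c : ℝ => ∫ z, asymLoss k₁ k₂ (z + c) * genGauss a b z)
      ((k₁ - k₂) / 2
        + Sgn c * ((k₁ + k₂) / (2 * Real.Gamma a)) * lowerGamma a (|c / b| ^ (1 / a))) c := by
  have hΓ : 0 < Real.Gamma a := Real.Gamma_pos_of_pos ha
  have hgGint := aux_gG_integrable ha hb
  have hgGcont := aux_gG_cont ha hb
  have hgGnn := aux_gG_nonneg ha hb
  have hzgGint : Integrable (fun z : ℝ => |z| * genGauss a b z) := by
    have h := (aux_zg_int ha hb).const_mul (2 * a * b * Real.Gamma a)⁻¹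
    refine h.congr (Filter.Eventually.of_forall fun z => ?_)
    rw [aux_genGauss_eq]
    ring
  have hLcont := aux_asymLoss_cont k₁ k₂
  have key := hasDerivAt_integral_of_dominated_loc_of_lip (μ := volume) (x₀ := c)
    (F := fun x z => asymLoss k₁ k₂ (z + x) * genGauss a b z)
    (F' := fun z => (if 0 ≤ z + c then k₁ else -k₂) * genGauss a b z)
    (bound := fun z => (k₁ + k₂) * genGauss a b z)
    (s := Metric.ball c 1) (Metric.ball_mem_nhds c one_pos)
    (Filter.Eventually.of_forall fun x =>
      ((hLcont.comp (continuous_add_right x)).mul hgGcont).aestronglyMeasurable)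
    ?hFint ?hF'meas ?hlip (hgGint.const_mul _) ?hdiff
  case hFint =>
    refine Integrable.mono' (((hzgGint.add (hgGint.const_mul |c|)).const_mul (k₁ + k₂)))
      ((hLcont.comp (continuous_add_right c)).mul hgGcont).aestronglyMeasurable
      (Filter.Eventually.of_forall fun z => ?_)
    have h1 : |asymLoss k₁ k₂ (z + c)| ≤ (k₁ + k₂) * |z + c| := aux_asymLoss_bound hk₁ hk₂ _
    have h2 : |z + c| ≤ |z| + |c| := abs_add_le z c
    have h3 : 0 ≤ genGauss a b z := hgGnn z
    have h4 : 0 ≤ k₁ + k₂ := by linarith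
    rw [Real.norm_eq_abs, abs_mul, abs_of_nonneg h3]
    calc |asymLoss k₁ k₂ (z + c)| * genGauss a b z
        ≤ ((k₁ + k₂) * (|z| + |c|)) * genGauss a b z :=
          mul_le_mul_of_nonneg_right (h1.trans (mul_le_mul_of_nonneg_left h2 h4)) h3
      _ = (k₁ + k₂) * (|z| * genGauss a b z + |c| * genGauss a b z) := by ring
  case hF'meas =>
    refine (Measurable.mul ?_ hgGcont.measurable).aestronglyMeasurable
    exact Measurable.ite (measurableSet_le measurable_const (measurable_id.add_const c))
      measurable_const measurable_const
  case hlip =>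
    refine Filter.Eventually.of_forall fun z => LipschitzWith.lipschitzOnWith ?_
    refine LipschitzWith.of_dist_le_mul fun x y => ?_
    rw [Real.dist_eq, Real.dist_eq]
    have hco : ((Real.nnabs ((k₁ + k₂) * genGauss a b z)) : ℝ)
        = (k₁ + k₂) * genGauss a b z := by
      rw [Real.coe_nnabs, abs_of_nonneg (by have := hgGnn z; nlinarith)]
    rw [hco]
    have h1 : asymLoss k₁ k₂ (z + x) * genGauss a b z - asymLoss k₁ k₂ (z + y) * genGauss a b z
        = (asymLoss k₁ k₂ (z + x) - asymLoss k₁ k₂ (z + y)) * genGauss a b z := by ring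
    rw [h1, abs_mul, abs_of_nonneg (hgGnn z)]
    have h2 := aux_asymLoss_lip hk₁ hk₂ (z + x) (z + y)
    have h3 : z + x - (z + y) = x - y := by ring
    rw [h3] at h2
    have h4 := hgGnn z
    nlinarith
  case hdiff =>
    have hae : ∀ᵐ z : ℝ, z ≠ -c := by
      have hs : {z : ℝ | ¬ z ≠ -c} = {-c} := by ext z; simp
      rw [ae_iff, hs]
      exact measure_singleton _
    refine hae.mono fun z hz => ?_
    have hz' : z + c ≠ 0 := fun h => hz (by linarith)
    rcases lt_or_gt_of_ne hz' with hneg | hpos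
    · have hbase : HasDerivAt (fun x : ℝ => -k₂ * (z + x)) (-k₂) c := by
        simpa using ((hasDerivAt_id c).const_add z).const_mul (-k₂)
      have hev : ∀ᶠ x in nhds c, -k₂ * (z + x) = asymLoss k₁ k₂ (z + x) := by
        have htend : Filter.Tendsto (fun x : ℝ => z + x) (nhds c) (nhds (z + c)) :=
          (continuous_const.add continuous_id).continuousAt
        filter_upwards [htend.eventually (eventually_lt_nhds hneg)] with x hx
        unfold asymLoss
        rw [if_neg (not_le.mpr hx)]
      have h1 : HasDerivAt (fun x : ℝ => asymLoss k₁ k₂ (z + x)) (-k₂) c :=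
        hbase.congr_of_eventuallyEq (hev.mono fun x hx => hx.symm)
      have := h1.mul_const (genGauss a b z)
      simpa [if_neg (not_le.mpr hneg)] using this
    · have hbase : HasDerivAt (fun x : ℝ => k₁ * (z + x)) k₁ c := by
        simpa using ((hasDerivAt_id c).const_add z).const_mul k₁
      have hev : ∀ᶠ x in nhds c, k₁ * (z + x) = asymLoss k₁ k₂ (z + x) := by
        have htend : Filter.Tendsto (fun x : ℝ => z + x) (nhds c) (nhds (z + c)) :=
          (continuous_const.add continuous_id).continuousAt
        filter_upwards [htend.eventually (eventually_gt_nhds hpos)] with x hx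
        unfold asymLoss
        rw [if_pos hx.le]
      have h1 : HasDerivAt (fun x : ℝ => asymLoss k₁ k₂ (z + x)) k₁ c :=
        hbase.congr_of_eventuallyEq (hev.mono fun x hx => hx.symm)
      have := h1.mul_const (genGauss a b z)
      simpa [if_pos hpos.le] using this
  have hfinal := key.2
  rwa [aux_value a b k₁ k₂ ha hb c] at hfinal
end

section
/- If a real number C satisfies γ(a, |C/b|^{1/a}) = Sgn(C)·((k₂ − k₁)/(k₁ + k₂))·Γ(a), then C is a global minimizer of the expected loss: for every real c, ∫ L(z + C)·f(z) dz ≤ ∫ L(z + c)·f(z) dz. -/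
open Real MeasureTheory Filter

section Aux
open Set

private lemma phi_image {a b : ℝ} (ha : 0 < a) (hb : 0 < b) {τ : ℝ} (hτ : 0 ≤ τ) :
    (fun t : ℝ => b * t ^ a) '' Ioi τ = Ioi (b * τ ^ a) := by
  ext y
  simp only [mem_image, mem_Ioi]
  constructor
  · rintro ⟨t, ht, rfl⟩
    exact mul_lt_mul_of_pos_left (Real.rpow_lt_rpow hτ ht ha) hb
  · intro hy
    have hτa : (0:ℝ) ≤ b * τ ^ a := by positivity
    have hy0 : 0 < y := lt_of_le_of_lt hτa hy
    refine ⟨(y / b) ^ a⁻¹, ?_, ?_⟩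
    · have h2 : τ ^ a < y / b := (lt_div_iff₀' hb).mpr hy
      have h3 := Real.rpow_lt_rpow (by positivity) h2 (inv_pos.mpr ha)
      rwa [Real.rpow_rpow_inv hτ ha.ne'] at h3
    · rw [Real.rpow_inv_rpow (le_of_lt (div_pos hy0 hb)) ha.ne']
      field_simp

private lemma subst_deriv {a b : ℝ} (ha : 0 < a) (hb : 0 < b) {τ : ℝ} (hτ : 0 ≤ τ) :
    ∀ t ∈ Ioi τ, HasDerivWithinAt (fun t : ℝ => b * t ^ a)
      (b * (a * t ^ (a - 1))) (Ioi τ) t := fun t ht =>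
  ((Real.hasDerivAt_rpow_const
    (Or.inl (ne_of_gt (lt_of_le_of_lt hτ ht)))).const_mul b).hasDerivWithinAt

private lemma subst_inj {a b : ℝ} (ha : 0 < a) (hb : 0 < b) {τ : ℝ} (hτ : 0 ≤ τ) :
    Set.InjOn (fun t : ℝ => b * t ^ a) (Ioi τ) := by
  intro s hs t ht h
  have hs0 : 0 ≤ s := le_trans hτ (le_of_lt hs)
  have ht0 : 0 ≤ t := le_trans hτ (le_of_lt ht)
  have h' : s ^ a = t ^ a := mul_left_cancel₀ (ne_of_gt hb) h
  calc s = (s ^ a) ^ a⁻¹ := (Real.rpow_rpow_inv hs0 ha.ne').symm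
    _ = (t ^ a) ^ a⁻¹ := by rw [h']
    _ = t := Real.rpow_rpow_inv ht0 ha.ne'

private lemma subst_integral {a b : ℝ} (ha : 0 < a) (hb : 0 < b) {τ : ℝ} (hτ : 0 ≤ τ)
    (g : ℝ → ℝ) :
    ∫ z in Ioi (b * τ ^ a), g z
      = ∫ t in Ioi τ, (b * (a * t ^ (a - 1))) * g (b * t ^ a) := by
  rw [← phi_image ha hb hτ,
    integral_image_eq_integral_abs_deriv_smul measurableSet_Ioi
      (subst_deriv ha hb hτ) (subst_inj ha hb hτ)]
  refine setIntegral_congr_fun measurableSet_Ioi fun t ht => ?_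
  have ht0 : 0 < t := lt_of_le_of_lt hτ ht
  rw [smul_eq_mul, abs_of_pos (by positivity)]

private lemma subst_integrable {a b : ℝ} (ha : 0 < a) (hb : 0 < b) {τ : ℝ} (hτ : 0 ≤ τ)
    {g : ℝ → ℝ}
    (h : IntegrableOn (fun t => (b * (a * t ^ (a - 1))) * g (b * t ^ a)) (Ioi τ)) :
    IntegrableOn g (Ioi (b * τ ^ a)) := by
  rw [← phi_image ha hb hτ,
    integrableOn_image_iff_integrableOn_abs_deriv_smul measurableSet_Ioi
      (subst_deriv ha hb hτ) (subst_inj ha hb hτ)]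
  refine h.congr_fun (fun t ht => ?_) measurableSet_Ioi
  have ht0 : 0 < t := lt_of_le_of_lt hτ ht
  rw [smul_eq_mul, abs_of_pos (by positivity)]

private lemma tail_exp {a b : ℝ} (ha : 0 < a) (hb : 0 < b) {s : ℝ} (hs : 0 ≤ s) :
    ∫ z in Ioi s, Real.exp (-((z / b) ^ (1 / a)))
      = a * b * upperGamma a ((s / b) ^ (1 / a)) := by
  set τ := (s / b) ^ (1 / a) with hτdef
  have hτ : 0 ≤ τ := Real.rpow_nonneg (div_nonneg hs hb.le) _
  have hbτ : b * τ ^ a = s := by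
    rw [hτdef, one_div, Real.rpow_inv_rpow (div_nonneg hs hb.le) ha.ne']
    field_simp
  rw [← hbτ, subst_integral ha hb hτ, upperGamma, ← integral_const_mul]
  refine setIntegral_congr_fun measurableSet_Ioi fun t ht => ?_
  have ht0 : 0 < t := lt_of_le_of_lt hτ ht
  have hdiv : b * t ^ a / b = t ^ a := by field_simp
  rw [hdiv, one_div, Real.rpow_rpow_inv ht0.le ha.ne']
  ring

private lemma tail_exp_integrable {a b : ℝ} (ha : 0 < a) (hb : 0 < b) {s : ℝ} (hs : 0 ≤ s) :
    IntegrableOn (fun z => Real.exp (-((z / b) ^ (1 / a)))) (Ioi s) := by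
  set τ := (s / b) ^ (1 / a) with hτdef
  have hτ : 0 ≤ τ := Real.rpow_nonneg (div_nonneg hs hb.le) _
  have hbτ : b * τ ^ a = s := by
    rw [hτdef, one_div, Real.rpow_inv_rpow (div_nonneg hs hb.le) ha.ne']
    field_simp
  rw [← hbτ]
  apply subst_integrable ha hb hτ
  have base : IntegrableOn (fun t : ℝ => Real.exp (-t) * t ^ (a - 1)) (Ioi τ) :=
    (Real.GammaIntegral_convergent ha).mono_set (Ioi_subset_Ioi hτ)
  refine IntegrableOn.congr_fun (base.const_mul (a * b)) (fun t ht => ?_) measurableSet_Ioi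
  have ht0 : 0 < t := lt_of_le_of_lt hτ ht
  have hdiv : b * t ^ a / b = t ^ a := by field_simp
  rw [hdiv, one_div, Real.rpow_rpow_inv ht0.le ha.ne']
  ring

private lemma weight_integrable {a b : ℝ} (ha : 0 < a) (hb : 0 < b) :
    IntegrableOn (fun z => z * Real.exp (-((z / b) ^ (1 / a)))) (Ioi 0) := by
  have h0 : Ioi (0:ℝ) = Ioi (b * 0 ^ a) := by
    rw [Real.zero_rpow ha.ne', mul_zero]
  rw [h0]
  apply subst_integrable ha hb le_rfl
  have base : IntegrableOn (fun t : ℝ => Real.exp (-t) * t ^ (2 * a - 1)) (Ioi 0) :=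
    Real.GammaIntegral_convergent (by linarith)
  refine IntegrableOn.congr_fun (base.const_mul (a * b * b)) (fun t ht => ?_) measurableSet_Ioi
  have ht0 : 0 < t := ht
  have hdiv : b * t ^ a / b = t ^ a := by field_simp
  have hsplit : t ^ (2 * a - 1) = t ^ (a - 1) * t ^ a := by
    rw [← Real.rpow_add ht0]; ring_nf
  rw [hdiv, one_div, Real.rpow_rpow_inv ht0.le ha.ne', hsplit]
  ring

private lemma lower_add_upper {p x : ℝ} (hp : 0 < p) (hx : 0 ≤ x) :
    lowerGamma p x + upperGamma p x = Real.Gamma p := by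
  rw [Real.Gamma_eq_integral hp, lowerGamma, upperGamma, intervalIntegral.integral_of_le hx]
  have hi : IntegrableOn (fun t : ℝ => t ^ (p - 1) * Real.exp (-t)) (Ioi 0) :=
    (Real.GammaIntegral_convergent hp).congr_fun (fun t _ => mul_comm _ _) measurableSet_Ioi
  rw [← setIntegral_union (Ioc_disjoint_Ioi le_rfl) measurableSet_Ioi
      (hi.mono_set Ioc_subset_Ioi_self) (hi.mono_set (Ioi_subset_Ioi hx)),
    Ioc_union_Ioi_eq_Ioi hx]
  exact setIntegral_congr_fun measurableSet_Ioi fun t _ => mul_comm _ _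

private lemma integrable_comp_abs' {F : ℝ → ℝ} (h : IntegrableOn F (Ioi 0)) :
    Integrable (fun x => F |x|) := by
  have h1 : IntegrableOn (fun x => F |x|) (Ioi 0) :=
    h.congr_fun (fun x hx => by rw [abs_of_pos hx]) measurableSet_Ioi
  have h2 : IntegrableOn (fun x => F |x|) (Iic 0) := by
    rw [← Measure.map_neg_eq_self (volume : Measure ℝ)]
    have m : MeasurableEmbedding fun x : ℝ => -x := (Homeomorph.neg ℝ).measurableEmbedding
    rw [m.integrableOn_map_iff]
    simp_rw [Function.comp_def, abs_neg, neg_preimage, neg_Iic, neg_zero]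
    exact (integrableOn_Ici_iff_integrableOn_Ioi enorm_ne_top).mpr h1
  rw [← integrableOn_univ, ← Set.Iic_union_Ioi (a := (0:ℝ))]
  exact h2.union h1

private lemma integral_Iio_neg_even {f : ℝ → ℝ} (hf : ∀ x, f (-x) = f x) (s : ℝ) :
    ∫ x in Iio (-s), f x = ∫ x in Ioi s, f x := by
  rw [setIntegral_congr_set Iio_ae_eq_Iic]
  have h := integral_comp_neg_Iic (-s) f
  simp only [neg_neg] at h
  rw [← h]
  exact setIntegral_congr_fun measurableSet_Iic fun x _ => (hf x).symm

section gg
variable {a b : ℝ}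

private lemma abs_div' (hb : 0 < b) (z : ℝ) : |z / b| = |z| / b := by
  rw [abs_div, abs_of_pos hb]

private lemma genGauss_even (z : ℝ) : genGauss a b (-z) = genGauss a b z := by
  rw [genGauss, genGauss, neg_div, abs_neg]

private lemma genGauss_nonneg (ha : 0 < a) (hb : 0 < b) (z : ℝ) : 0 ≤ genGauss a b z := by
  have hΓ : 0 < Real.Gamma a := Real.Gamma_pos_of_pos ha
  rw [genGauss]; positivity

private lemma genGauss_integrable (ha : 0 < a) (hb : 0 < b) : Integrable (genGauss a b) := by
  have h : Integrable (fun z : ℝ => Real.exp (-((|z| / b) ^ (1 / a)))) :=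
    integrable_comp_abs' (tail_exp_integrable ha hb le_rfl)
  refine (h.const_mul ((2 * a * b * Real.Gamma a)⁻¹)).congr (.of_forall fun z => ?_)
  simp only [genGauss]; rw [abs_div' hb]

private lemma genGauss_abs_integrable (ha : 0 < a) (hb : 0 < b) :
    Integrable (fun z => |z| * genGauss a b z) := by
  have h : Integrable (fun z : ℝ => |z| * Real.exp (-((|z| / b) ^ (1 / a)))) :=
    integrable_comp_abs' (weight_integrable ha hb)
  refine (h.const_mul ((2 * a * b * Real.Gamma a)⁻¹)).congr (.of_forall fun z => ?_)
  simp only [genGauss]; rw [abs_div' hb]; ring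

private lemma upperGamma_zero_s6 (ha : 0 < a) : upperGamma a 0 = Real.Gamma a := by
  rw [Real.Gamma_eq_integral ha, upperGamma]
  exact setIntegral_congr_fun measurableSet_Ioi fun t _ => mul_comm _ _

private lemma genGauss_total (ha : 0 < a) (hb : 0 < b) : ∫ z, genGauss a b z = 1 := by
  have hΓ : 0 < Real.Gamma a := Real.Gamma_pos_of_pos ha
  have habs : ∫ z : ℝ, Real.exp (-((|z| / b) ^ (1 / a)))
      = 2 * ∫ z in Ioi (0:ℝ), Real.exp (-((z / b) ^ (1 / a))) := integral_comp_abs (f := fun y => Real.exp (-((y / b) ^ (1 / a))))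
  have h1 : ∫ z, genGauss a b z
      = (2 * a * b * Real.Gamma a)⁻¹ * ∫ z : ℝ, Real.exp (-((|z| / b) ^ (1 / a))) := by
    rw [← integral_const_mul]
    exact integral_congr_ae (.of_forall fun z => by rw [genGauss, abs_div' hb])
  rw [h1, habs, tail_exp ha hb le_rfl, zero_div,
    Real.zero_rpow (by positivity : (1:ℝ)/a ≠ 0), upperGamma_zero_s6 ha]
  field_simp

private lemma genGauss_tail (ha : 0 < a) (hb : 0 < b) {s : ℝ} (hs : 0 ≤ s) :
    ∫ z in Ioi s, genGauss a b z
      = upperGamma a ((s / b) ^ (1 / a)) / (2 * Real.Gamma a) := by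
  have hΓ : 0 < Real.Gamma a := Real.Gamma_pos_of_pos ha
  have h1 : ∫ z in Ioi s, genGauss a b z = (2 * a * b * Real.Gamma a)⁻¹ *
      ∫ z in Ioi s, Real.exp (-((z / b) ^ (1 / a))) := by
    rw [← integral_const_mul]
    refine setIntegral_congr_fun measurableSet_Ioi fun z hz => ?_
    have hz0 : 0 < z := lt_of_le_of_lt hs hz
    rw [genGauss, abs_of_pos (by positivity)]
  rw [h1, tail_exp ha hb hs]
  field_simp
end gg

private lemma subgrad {k₁ k₂ : ℝ} (hk₁ : 0 < k₁) (hk₂ : 0 < k₂) (w d : ℝ) :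
    asymLoss k₁ k₂ w + (if 0 ≤ w then k₁ else -k₂) * d ≤ asymLoss k₁ k₂ (w + d) := by
  unfold asymLoss
  split_ifs with h1 h2 h2 <;> nlinarith

private lemma asymLoss_abs_le {k₁ k₂ : ℝ} (hk₁ : 0 < k₁) (hk₂ : 0 < k₂) (w : ℝ) :
    |asymLoss k₁ k₂ w| ≤ (k₁ + k₂) * |w| := by
  unfold asymLoss
  split_ifs with h
  · rw [abs_mul, abs_of_nonneg hk₁.le]
    nlinarith [abs_nonneg w]
  · rw [abs_mul, abs_neg, abs_of_nonneg hk₂.le]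
    nlinarith [abs_nonneg w]

private lemma asymLoss_cont {k₁ k₂ d : ℝ} : Continuous fun z => asymLoss k₁ k₂ (z + d) := by
  have h : ∀ z : ℝ, asymLoss k₁ k₂ (z + d)
      = (k₁ + k₂) / 2 * |z + d| + (k₁ - k₂) / 2 * (z + d) := by
    intro z
    unfold asymLoss
    rcases le_or_gt 0 (z + d) with h | h
    · rw [if_pos h, abs_of_nonneg h]; ring
    · rw [if_neg (not_le.mpr h), abs_of_neg h]; ring
  simp only [h]
  fun_prop


end Aux

open Set in
theorem minimizer_expected_loss (a b k₁ k₂ : ℝ) (ha : 0 < a) (hb : 0 < b)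
    (hk₁ : 0 < k₁) (hk₂ : 0 < k₂) (C : ℝ)
    (hC : lowerGamma a (|C / b| ^ (1 / a)) = Sgn C * ((k₂ - k₁) / (k₁ + k₂)) * Real.Gamma a) :
    ∀ c : ℝ, (∫ z, asymLoss k₁ k₂ (z + C) * genGauss a b z)
      ≤ ∫ z, asymLoss k₁ k₂ (z + c) * genGauss a b z := by
  intro c
  have hΓ : 0 < Real.Gamma a := Real.Gamma_pos_of_pos ha
  have hk12 : 0 < k₁ + k₂ := by linarith
  set f : ℝ → ℝ := genGauss a b with hf
  have hf_int : Integrable f := genGauss_integrable ha hb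
  have hfabs_int : Integrable fun z => |z| * f z := genGauss_abs_integrable ha hb
  -- integrability of the loss integrand
  have key_int : ∀ d : ℝ, Integrable fun z => asymLoss k₁ k₂ (z + d) * f z := by
    intro d
    have hG : Integrable fun z => (k₁ + k₂) * (|z| * f z + |d| * f z) :=
      ((hfabs_int.add (hf_int.const_mul |d|)).const_mul (k₁ + k₂))
    have hmeas : AEStronglyMeasurable (fun z => asymLoss k₁ k₂ (z + d) * f z) volume :=
      (asymLoss_cont.aestronglyMeasurable).mul hf_int.aestronglyMeasurable
    refine hG.mono hmeas (.of_forall fun z => ?_)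
    have h1 : |asymLoss k₁ k₂ (z + d)| ≤ (k₁ + k₂) * |z + d| := asymLoss_abs_le hk₁ hk₂ _
    have h2 : (k₁ + k₂) * |z + d| ≤ (k₁ + k₂) * (|z| + |d|) :=
      mul_le_mul_of_nonneg_left (abs_add_le z d) hk12.le
    have h3 : 0 ≤ f z := genGauss_nonneg ha hb z
    have h5 : ‖asymLoss k₁ k₂ (z + d) * f z‖ ≤ (k₁ + k₂) * (|z| * f z + |d| * f z) :=
      calc ‖asymLoss k₁ k₂ (z + d) * f z‖ = |asymLoss k₁ k₂ (z + d)| * f z := by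
            rw [norm_mul, Real.norm_eq_abs, Real.norm_eq_abs, abs_of_nonneg h3]
        _ ≤ ((k₁ + k₂) * (|z| + |d|)) * f z :=
            mul_le_mul_of_nonneg_right (h1.trans h2) h3
        _ = (k₁ + k₂) * (|z| * f z + |d| * f z) := by ring
    exact h5.trans ((le_abs_self _).trans_eq (Real.norm_eq_abs _).symm)
  -- the subgradient weight function
  have hrepr : (fun z => (if 0 ≤ z + C then k₁ else -k₂) * f z)
      = fun z => k₁ * f z - (k₁ + k₂) * Set.indicator (Iio (-C)) f z := by
    funext z
    by_cases h : 0 ≤ z + C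
    · rw [if_pos h, Set.indicator_of_notMem (by simp only [mem_Iio]; linarith)]
      ring
    · rw [if_neg h, Set.indicator_of_mem (by simp only [mem_Iio]; linarith)]
      ring
  have hg_int : Integrable fun z => (if 0 ≤ z + C then k₁ else -k₂) * f z := by
    rw [hrepr]
    exact (hf_int.const_mul k₁).sub ((hf_int.indicator measurableSet_Iio).const_mul (k₁ + k₂))
  -- the key probability computation
  have hΓ' : Real.Gamma a ≠ 0 := hΓ.ne'
  have hk12' : k₁ + k₂ ≠ 0 := hk12.ne'
  have hP : ∫ z in Iio (-C), f z = k₁ / (k₁ + k₂) := by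
    by_cases hC0 : 0 ≤ C
    · have hCb : |C / b| = C / b := abs_of_nonneg (div_nonneg hC0 hb.le)
      rw [Sgn, if_pos hC0, hCb, one_mul] at hC
      have hx : (0:ℝ) ≤ (C / b) ^ (1 / a) := Real.rpow_nonneg (div_nonneg hC0 hb.le) _
      have hU : upperGamma a ((C / b) ^ (1 / a))
          = Real.Gamma a - (k₂ - k₁) / (k₁ + k₂) * Real.Gamma a := by
        linarith [lower_add_upper ha hx, hC]
      rw [integral_Iio_neg_even (fun x => genGauss_even x) C, genGauss_tail ha hb hC0, hU]
      field_simp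
      ring
    · push_neg at hC0
      have hs : 0 ≤ -C := by linarith
      have hCb : |C / b| = -C / b := by
        rw [abs_div, abs_of_pos hb, abs_of_neg hC0, neg_div]
      rw [Sgn, if_neg (not_le.mpr hC0), hCb] at hC
      have hx : (0:ℝ) ≤ (-C / b) ^ (1 / a) := Real.rpow_nonneg (div_nonneg hs hb.le) _
      have hU : upperGamma a ((-C / b) ^ (1 / a))
          = Real.Gamma a + (k₂ - k₁) / (k₁ + k₂) * Real.Gamma a := by
        linarith [lower_add_upper ha hx, hC]
      have hsplit : (∫ z in Iio (-C), f z) + ∫ z in Ici (-C), f z = ∫ z, f z :=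
        intervalIntegral.integral_Iio_add_Ici hf_int.integrableOn hf_int.integrableOn
      have hIci : ∫ z in Ici (-C), f z = ∫ z in Ioi (-C), f z :=
        (setIntegral_congr_set Ioi_ae_eq_Ici).symm
      rw [genGauss_total ha hb, hIci, genGauss_tail ha hb hs, hU] at hsplit
      have hV : (Real.Gamma a + (k₂ - k₁) / (k₁ + k₂) * Real.Gamma a) / (2 * Real.Gamma a)
          = k₂ / (k₁ + k₂) := by field_simp; ring
      rw [hV] at hsplit
      have hW : k₁ / (k₁ + k₂) = 1 - k₂ / (k₁ + k₂) := by field_simp; ring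
      linarith
  -- the expected subgradient vanishes
  have hzero : ∫ z, (if 0 ≤ z + C then k₁ else -k₂) * f z = 0 := by
    rw [hrepr, integral_sub (hf_int.const_mul k₁)
        ((hf_int.indicator measurableSet_Iio).const_mul (k₁ + k₂)),
      integral_const_mul, integral_const_mul, integral_indicator measurableSet_Iio,
      genGauss_total ha hb, hP]
    field_simp
    ring
  -- assemble
  have point : ∀ z, asymLoss k₁ k₂ (z + C) * f z
      + ((if 0 ≤ z + C then k₁ else -k₂) * f z) * (c - C) ≤ asymLoss k₁ k₂ (z + c) * f z := by
    intro z
    have hsub := subgrad hk₁ hk₂ (z + C) (c - C)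
    rw [show z + C + (c - C) = z + c by ring] at hsub
    calc asymLoss k₁ k₂ (z + C) * f z + ((if 0 ≤ z + C then k₁ else -k₂) * f z) * (c - C)
        = (asymLoss k₁ k₂ (z + C) + (if 0 ≤ z + C then k₁ else -k₂) * (c - C)) * f z := by ring
      _ ≤ asymLoss k₁ k₂ (z + c) * f z :=
          mul_le_mul_of_nonneg_right hsub (genGauss_nonneg ha hb z)
  have hmono : ∫ z, (asymLoss k₁ k₂ (z + C) * f z
        + ((if 0 ≤ z + C then k₁ else -k₂) * f z) * (c - C))
      ≤ ∫ z, asymLoss k₁ k₂ (z + c) * f z :=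
    integral_mono ((key_int C).add (hg_int.mul_const (c - C))) (key_int c) point
  rwa [integral_add (key_int C) (hg_int.mul_const (c - C)), integral_mul_const, hzero,
    zero_mul, add_zero] at hmono
end
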